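/- For every fixed Γ ∈ ℝ^{q×(k+1)} and every β ∈ ℝ^p at which Σ(β,Γ) is invertible, the function β ↦ G₂(β,Γ) = det Σ(β,Γ) is differentiable at β and its gradient equals −(2 · det Σ(β,Γ) / N) Σ_{t=c+k+1}^{T−h} X_t' Γ' Σ(β,Γ)⁻¹ (y_{t+h} − Γ X_t β). In particular, if det Σ(β,Γ) > 0, the gradient vanishes if and only if Σ_{t=c+k+1}^{T−h} X_t' Γ' Σ(β,Γ)⁻¹ (y_{t+h} − Γ X_t β) = 0. -/

import Mathlib

open Finset Matrix

noncomputable section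

/-- The `(k+1) × p` matrix `X_t` whose rows are `x_t', x_{t-1}', …, x_{t-k}'. -/
def Xmat {p : ℕ} (k : ℕ) (x : ℕ → Fin p → ℝ) (t : ℕ) :
    Matrix (Fin (k + 1)) (Fin p) ℝ :=
  Matrix.of fun j i => x (t - (j : ℕ)) i

/-- Prediction error `e_t(β,Γ) = y_{t+h} - Γ X_t β`. -/
def errVec {p q : ℕ} (h k : ℕ) (x : ℕ → Fin p → ℝ) (y : ℕ → Fin q → ℝ)
    (β : Fin p → ℝ) (Γ : Matrix (Fin q) (Fin (k + 1)) ℝ) (t : ℕ) : Fin q → ℝ :=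
  y (t + h) - (Γ * Xmat k x t).mulVec β

/-- Residual covariance matrix `Σ(β,Γ) = (1/N) Σ_t e_t(β,Γ) e_t(β,Γ)'`. -/
def SigmaMat (T h c k : ℕ) {p q : ℕ} (x : ℕ → Fin p → ℝ) (y : ℕ → Fin q → ℝ)
    (β : Fin p → ℝ) (Γ : Matrix (Fin q) (Fin (k + 1)) ℝ) :
    Matrix (Fin q) (Fin q) ℝ :=
  (1 / ((T - h - c - k : ℕ) : ℝ)) •
    ∑ t ∈ Icc (c + k + 1) (T - h),
      Matrix.vecMulVec (errVec h k x y β Γ t) (errVec h k x y β Γ t)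

/-- Determinant loss `G₂(β,Γ) = det Σ(β,Γ)`. -/
def lossG2 (T h c k : ℕ) {p q : ℕ} (x : ℕ → Fin p → ℝ) (y : ℕ → Fin q → ℝ)
    (β : Fin p → ℝ) (Γ : Matrix (Fin q) (Fin (k + 1)) ℝ) : ℝ :=
  (SigmaMat T h c k x y β Γ).det

def dotCLM {p : ℕ} (w : Fin p → ℝ) : (Fin p → ℝ) →L[ℝ] ℝ :=
  LinearMap.toContinuousLinearMap
    { toFun := fun v => w ⬝ᵥ v
      map_add' := fun a b => dotProduct_add w a b
      map_smul' := fun c a => by simp }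
@[simp] lemma dotCLM_apply {p : ℕ} (w v : Fin p → ℝ) : dotCLM w v = w ⬝ᵥ v := rfl




section
variable {p q : ℕ} (T h c k : ℕ) (x : ℕ → Fin p → ℝ) (y : ℕ → Fin q → ℝ)
    (Γ : Matrix (Fin q) (Fin (k + 1)) ℝ) (β : Fin p → ℝ)

lemma hent (b : Fin p → ℝ) (i j : Fin q) :
    SigmaMat T h c k x y b Γ i j
      = (1 / ((T - h - c - k : ℕ) : ℝ)) *
        ∑ t ∈ Icc (c + k + 1) (T - h), (errVec h k x y b Γ t i * errVec h k x y b Γ t j) := by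
  simp [SigmaMat, vecMulVec_apply, Matrix.smul_apply, Matrix.sum_apply]

lemma herr' {p q : ℕ} (h k : ℕ) (x : ℕ → Fin p → ℝ) (y : ℕ → Fin q → ℝ)
    (Γ : Matrix (Fin q) (Fin (k + 1)) ℝ) (β : Fin p → ℝ) (t : ℕ) (i : Fin q) :
    HasFDerivAt (fun b => errVec h k x y b Γ t i) (-(dotCLM ((Γ * Xmat k x t) i))) β := by
  have : (fun b : Fin p → ℝ => errVec h k x y b Γ t i)
      = fun b => y (t + h) i - (Γ * Xmat k x t) i ⬝ᵥ b := rfl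
  rw [this]
  have H := (hasFDerivAt_const (y (t + h) i) β).sub (dotCLM ((Γ * Xmat k x t) i)).hasFDerivAt
  rw [zero_sub] at H
  exact H

lemma hasD (i j : Fin q) :
    HasFDerivAt (fun b => SigmaMat T h c k x y b Γ i j)
      ((1 / ((T - h - c - k : ℕ) : ℝ)) •
        ∑ t ∈ Icc (c + k + 1) (T - h),
          ((errVec h k x y β Γ t i) • (-(dotCLM ((Γ * Xmat k x t) j)))
            + (errVec h k x y β Γ t j) • (-(dotCLM ((Γ * Xmat k x t) i))))) β := by
  have h1 : HasFDerivAt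
      (fun b => ∑ t ∈ Icc (c + k + 1) (T - h), (errVec h k x y b Γ t i * errVec h k x y b Γ t j))
      (∑ t ∈ Icc (c + k + 1) (T - h),
          ((errVec h k x y β Γ t i) • (-(dotCLM ((Γ * Xmat k x t) j)))
            + (errVec h k x y β Γ t j) • (-(dotCLM ((Γ * Xmat k x t) i))))) β := by
    refine HasFDerivAt.fun_sum fun t _ => ?_
    exact (herr' h k x y Γ β t i).mul (herr' h k x y Γ β t j)
  have h2 := h1.const_mul ((1 : ℝ) / ((T - h - c - k : ℕ) : ℝ))
  have h3 : (fun b => (1 / ((T - h - c - k : ℕ) : ℝ)) *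
      ∑ t ∈ Icc (c + k + 1) (T - h), (errVec h k x y b Γ t i * errVec h k x y b Γ t j))
      = fun b => SigmaMat T h c k x y b Γ i j := by
    funext b; rw [hent]
  rwa [h3] at h2
end

def detCM (q : ℕ) : ContinuousMultilinearMap ℝ (fun _ : Fin q => Fin q → ℝ) ℝ where
  toMultilinearMap := (Matrix.detRowAlternating (R := ℝ) (n := Fin q)).toMultilinearMap
  cont := by
    show Continuous fun m : Matrix (Fin q) (Fin q) ℝ => m.det
    exact Continuous.matrix_det continuous_id

/-- entry-derivative abbreviation -/
def Dent (T h c k : ℕ) {p q : ℕ} (x : ℕ → Fin p → ℝ) (y : ℕ → Fin q → ℝ)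
    (Γ : Matrix (Fin q) (Fin (k + 1)) ℝ) (β : Fin p → ℝ) (i j : Fin q) :
    (Fin p → ℝ) →L[ℝ] ℝ :=
  (1 / ((T - h - c - k : ℕ) : ℝ)) •
    ∑ t ∈ Icc (c + k + 1) (T - h),
      ((errVec h k x y β Γ t i) • (-(dotCLM ((Γ * Xmat k x t) j)))
        + (errVec h k x y β Γ t j) • (-(dotCLM ((Γ * Xmat k x t) i))))


section
variable {p q : ℕ} (T h c k : ℕ) (x : ℕ → Fin p → ℝ) (y : ℕ → Fin q → ℝ)
    (Γ : Matrix (Fin q) (Fin (k + 1)) ℝ) (β : Fin p → ℝ)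

lemma hasG2 :
    HasFDerivAt (fun b => lossG2 T h c k x y b Γ)
      (∑ r : Fin q,
        ((detCM q).toContinuousLinearMap (fun j => SigmaMat T h c k x y β Γ j) r)
          ∘L (ContinuousLinearMap.pi (fun j => Dent T h c k x y Γ β r j))) β := by
  classical
  have hrow : ∀ r : Fin q, HasFDerivAt (fun b => SigmaMat T h c k x y b Γ r)
      (ContinuousLinearMap.pi (fun j => Dent T h c k x y Γ β r j)) β := by
    intro r
    exact hasFDerivAt_pi.2 fun j => hasD T h c k x y Γ β r j
  exact HasFDerivAt.multilinear_comp (f := detCM q) hrow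

lemma eval0 (v : Fin p → ℝ) :
    (∑ r : Fin q,
        ((detCM q).toContinuousLinearMap (fun j => SigmaMat T h c k x y β Γ j) r)
          ∘L (ContinuousLinearMap.pi (fun j => Dent T h c k x y Γ β r j))) v
      = ∑ r : Fin q,
          ((SigmaMat T h c k x y β Γ).updateRow r
            (fun j => Dent T h c k x y Γ β r j v)).det := by
  classical
  simp only [ContinuousLinearMap.sum_apply, ContinuousLinearMap.comp_apply,
    ContinuousMultilinearMap.toContinuousLinearMap_apply, ContinuousLinearMap.pi_apply]
  rfl
end

section
variable {p q : ℕ} (T h c k : ℕ) (x : ℕ → Fin p → ℝ) (y : ℕ → Fin q → ℝ)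
    (Γ : Matrix (Fin q) (Fin (k + 1)) ℝ) (β : Fin p → ℝ)

lemma sigma_symm : (SigmaMat T h c k x y β Γ)ᵀ = SigmaMat T h c k x y β Γ := by
  ext i j
  simp only [transpose_apply, hent, mul_comm]

lemma det_updateRow_sigma (r : Fin q) (w : Fin q → ℝ) :
    ((SigmaMat T h c k x y β Γ).updateRow r w).det
      = ((SigmaMat T h c k x y β Γ).adjugate *ᵥ w) r := by
  conv_lhs => rw [← sigma_symm T h c k x y Γ β]
  rw [updateRow_transpose, det_transpose, ← cramer_apply, cramer_eq_adjugate_mulVec]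
end

section
variable {p q : ℕ} (T h c k : ℕ) (x : ℕ → Fin p → ℝ) (y : ℕ → Fin q → ℝ)
    (Γ : Matrix (Fin q) (Fin (k + 1)) ℝ) (β : Fin p → ℝ)

lemma adj_symm (a b : Fin q) :
    (SigmaMat T h c k x y β Γ).adjugate a b = (SigmaMat T h c k x y β Γ).adjugate b a := by
  conv_lhs => rw [← sigma_symm T h c k x y Γ β, ← adjugate_transpose]
  rfl

lemma Dent_single (r j : Fin q) (i0 : Fin p) :
    Dent T h c k x y Γ β r j (Pi.single i0 1)
      = (1 / ((T - h - c - k : ℕ) : ℝ)) *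
          ∑ t ∈ Icc (c + k + 1) (T - h),
            (errVec h k x y β Γ t r * (-((Γ * Xmat k x t) j i0))
              + errVec h k x y β Γ t j * (-((Γ * Xmat k x t) r i0))) := by
  simp [Dent, ContinuousLinearMap.sum_apply, dotProduct_single, mul_comm]

lemma main_eval (hSig : IsUnit (SigmaMat T h c k x y β Γ).det) (i0 : Fin p) :
    ∑ r : Fin q, ((SigmaMat T h c k x y β Γ).adjugate *ᵥ
        (fun j => Dent T h c k x y Γ β r j (Pi.single i0 1))) r
      = ((-(2 * (SigmaMat T h c k x y β Γ).det / ((T - h - c - k : ℕ) : ℝ))) •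
          ∑ t ∈ Icc (c + k + 1) (T - h),
            (Xmat k x t)ᵀ.mulVec (Γᵀ.mulVec
              ((SigmaMat T h c k x y β Γ)⁻¹.mulVec (errVec h k x y β Γ t)))) i0 := by
  classical
  set A := SigmaMat T h c k x y β Γ with hA
  set e := fun t => errVec h k x y β Γ t with he
  set M := fun t => Γ * Xmat k x t with hM
  set S := Icc (c + k + 1) (T - h) with hSdef
  set N' : ℝ := ((T - h - c - k : ℕ) : ℝ) with hN'
  have hdA : A.det ≠ 0 := by
    simpa [isUnit_iff_ne_zero] using hSig
  have hAinv : A⁻¹ = (A.det)⁻¹ • A.adjugate := by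
    rw [Matrix.inv_def, Ring.inverse_eq_inv']
  -- Q t := ∑ r ∑ j, M t r i0 * (adj r j * e t j)
  set Q : ℕ → ℝ := fun t => ∑ r : Fin q, ∑ j : Fin q,
    M t r i0 * (A.adjugate r j * e t j) with hQ
  have hL : ∑ r : Fin q, (A.adjugate *ᵥ
        (fun j => Dent T h c k x y Γ β r j (Pi.single i0 1))) r
      = (1 / N') * ∑ t ∈ S, (-2 * Q t) := by
    have : ∀ r : Fin q, (A.adjugate *ᵥ
          (fun j => Dent T h c k x y Γ β r j (Pi.single i0 1))) r
        = (1 / N') * ∑ t ∈ S, ∑ j : Fin q,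
            A.adjugate r j * (e t r * (-(M t j i0)) + e t j * (-(M t r i0))) := by
      intro r
      simp only [mulVec, dotProduct, Dent_single, Finset.mul_sum]
      rw [Finset.sum_comm]
      exact Finset.sum_congr rfl fun t _ => Finset.sum_congr rfl fun j _ => by ring
    rw [Finset.sum_congr rfl fun r _ => this r]
    rw [← Finset.mul_sum, Finset.sum_comm]
    congr 1
    refine Finset.sum_congr rfl fun t _ => ?_
    have h1 : ∑ r : Fin q, ∑ j : Fin q, A.adjugate r j * (e t r * (-(M t j i0)))
        = -Q t := by
      rw [Finset.sum_comm, hQ]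
      simp only [← Finset.sum_neg_distrib]
      refine Finset.sum_congr rfl fun a _ => Finset.sum_congr rfl fun b _ => ?_
      rw [adj_symm T h c k x y Γ β b a]
      ring
    have h2 : ∑ r : Fin q, ∑ j : Fin q, A.adjugate r j * (e t j * (-(M t r i0)))
        = -Q t := by
      rw [hQ]
      simp only [← Finset.sum_neg_distrib]
      exact Finset.sum_congr rfl fun a _ => Finset.sum_congr rfl fun b _ => by ring
    calc ∑ r : Fin q, ∑ j : Fin q,
          A.adjugate r j * (e t r * (-(M t j i0)) + e t j * (-(M t r i0)))
        = (∑ r : Fin q, ∑ j : Fin q, A.adjugate r j * (e t r * (-(M t j i0))))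
          + ∑ r : Fin q, ∑ j : Fin q, A.adjugate r j * (e t j * (-(M t r i0))) := by
          simp [mul_add, Finset.sum_add_distrib]
      _ = -2 * Q t := by rw [h1, h2]; ring
  have hz : ∀ t (r : Fin q), ((A⁻¹) *ᵥ e t) r
      = (A.det)⁻¹ * ∑ j : Fin q, A.adjugate r j * e t j := by
    intro t r
    rw [hAinv]
    simp [mulVec, dotProduct, Finset.mul_sum, mul_assoc]
  have hR : ((-(2 * A.det / N')) •
        ∑ t ∈ S, (Xmat k x t)ᵀ.mulVec (Γᵀ.mulVec ((A⁻¹).mulVec (e t)))) i0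
      = (1 / N') * ∑ t ∈ S, (-2 * Q t) := by
    have hterm : ∀ t, ((Xmat k x t)ᵀ.mulVec (Γᵀ.mulVec ((A⁻¹).mulVec (e t)))) i0
        = (A.det)⁻¹ * Q t := by
      intro t
      rw [mulVec_mulVec, ← transpose_mul]
      show ((M t)ᵀ *ᵥ (A⁻¹ *ᵥ e t)) i0 = _
      rw [hQ, hAinv]
      simp only [mulVec, dotProduct, transpose_apply, Matrix.smul_apply, smul_eq_mul,
        Finset.mul_sum]
      exact Finset.sum_congr rfl fun r _ => Finset.sum_congr rfl fun j _ => by ring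
    simp only [Pi.smul_apply, Finset.sum_apply, smul_eq_mul]
    rw [Finset.sum_congr rfl fun t _ => hterm t]
    rw [Finset.mul_sum, Finset.mul_sum]
    refine Finset.sum_congr rfl fun t _ => ?_
    have h1 : A.det * A.det⁻¹ = 1 := mul_inv_cancel₀ hdA
    linear_combination (-(2 / N') * Q t) * h1
  rw [hL, ← hR]

theorem gradient_of_G2_in_beta
    {p q : ℕ} (hp : 1 ≤ p) (hq : 1 ≤ q) (T h c k : ℕ)
    (hN : 1 ≤ T - h - c - k)
    (x : ℕ → Fin p → ℝ) (y : ℕ → Fin q → ℝ)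
    (Γ : Matrix (Fin q) (Fin (k + 1)) ℝ) (β : Fin p → ℝ)
    (hSig : IsUnit (SigmaMat T h c k x y β Γ).det) :
    DifferentiableAt ℝ (fun b : Fin p → ℝ => lossG2 T h c k x y b Γ) β ∧
    (∀ i, fderiv ℝ (fun b : Fin p → ℝ => lossG2 T h c k x y b Γ) β (Pi.single i 1)
      = ((-(2 * (SigmaMat T h c k x y β Γ).det / ((T - h - c - k : ℕ) : ℝ))) •
          ∑ t ∈ Icc (c + k + 1) (T - h),
            (Xmat k x t)ᵀ.mulVec (Γᵀ.mulVec
              ((SigmaMat T h c k x y β Γ)⁻¹.mulVec (errVec h k x y β Γ t)))) i) ∧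
    (0 < (SigmaMat T h c k x y β Γ).det →
      ((∀ i, fderiv ℝ (fun b : Fin p → ℝ => lossG2 T h c k x y b Γ) β
          (Pi.single i 1) = 0) ↔
        ∑ t ∈ Icc (c + k + 1) (T - h),
          (Xmat k x t)ᵀ.mulVec (Γᵀ.mulVec
            ((SigmaMat T h c k x y β Γ)⁻¹.mulVec (errVec h k x y β Γ t))) = 0)) := by
  classical
  have H := hasG2 T h c k x y Γ β
  have hfd : ∀ i, fderiv ℝ (fun b : Fin p → ℝ => lossG2 T h c k x y b Γ) β (Pi.single i 1)
      = ((-(2 * (SigmaMat T h c k x y β Γ).det / ((T - h - c - k : ℕ) : ℝ))) •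
          ∑ t ∈ Icc (c + k + 1) (T - h),
            (Xmat k x t)ᵀ.mulVec (Γᵀ.mulVec
              ((SigmaMat T h c k x y β Γ)⁻¹.mulVec (errVec h k x y β Γ t)))) i := by
    intro i
    rw [H.fderiv, eval0,
      Finset.sum_congr rfl fun r _ => det_updateRow_sigma T h c k x y Γ β r _]
    exact main_eval T h c k x y Γ β hSig i
  refine ⟨H.differentiableAt, hfd, ?_⟩
  intro hdet
  have hN0 : ((T - h - c - k : ℕ) : ℝ) ≠ 0 := by
    have : (0 : ℕ) < T - h - c - k := hN
    exact_mod_cast this.ne'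
  have hcc : -(2 * (SigmaMat T h c k x y β Γ).det / ((T - h - c - k : ℕ) : ℝ)) ≠ 0 := by
    apply neg_ne_zero.mpr
    exact div_ne_zero (by positivity) hN0
  constructor
  · intro hall
    funext i
    have := hall i
    rw [hfd i] at this
    simp only [Pi.smul_apply, smul_eq_mul, Pi.zero_apply] at this ⊢
    exact (mul_eq_zero.mp this).resolve_left hcc
  · intro hV i
    rw [hfd i, hV]
    simp
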